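/- Let F be a real quadratic number field with ring of integers O_F, let p be an odd prime that does not divide the discriminant of F, and let ε ∈ O_Fˣ be a fundamental unit, i.e. every unit u ∈ O_Fˣ equals ε^n or −ε^n for some integer n. Then ε^{p²−1} ≡ 1 (mod p²O_F) if and only if every unit u ∈ O_Fˣ with u ≡ 1 (mod pO_F) satisfies u ≡ 1 (mod p²O_F). -/

import Mathlib

open NumberField Matrix

private theorem wieferich_aux_upow {A : Type*} [CommRing A] (p : ℕ) (u : A)
    (hu : (p : A) ∣ u - 1) : ((p : A)) ^ 2 ∣ u ^ p - 1 := by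
  have hgeom : (∑ i ∈ Finset.range p, u ^ i) * (u - 1) = u ^ p - 1 := geom_sum_mul u p
  have hsum : (p : A) ∣ ∑ i ∈ Finset.range p, u ^ i := by
    have h1 : (p : A) ∣ (∑ i ∈ Finset.range p, u ^ i) - p := by
      have he : (∑ i ∈ Finset.range p, u ^ i) - p = ∑ i ∈ Finset.range p, (u ^ i - 1) := by
        rw [Finset.sum_sub_distrib, Finset.sum_const, Finset.card_range]
        simp [nsmul_eq_mul]
      rw [he]
      refine Finset.dvd_sum fun i _ => dvd_trans hu ?_
      simpa using sub_dvd_pow_sub_pow u 1 i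
    have h2 := dvd_add h1 (dvd_refl (p : A))
    simpa using h2
  obtain ⟨a, ha⟩ := hsum
  obtain ⟨c, hc⟩ := hu
  refine ⟨a * c, ?_⟩
  rw [← hgeom, ha, hc]; ring

set_option maxHeartbeats 1000000 in
private theorem wieferich_aux_frobgen {R : Type*} [CommRing R] [IsReduced R] (p : ℕ)
    [Fact p.Prime] [Algebra (ZMod p) R] {ι : Type*} [Fintype ι] (hcard : Fintype.card ι = 2)
    (g : ι → R) (hg : Submodule.span (ZMod p) (Set.range g) = ⊤) (y : R) : y ^ p ^ 2 = y := by
  classical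
  have hp := (Fact.out : p.Prime)
  have hmem : y ^ p ^ 2 - y ∈ nilradical R := by
    rw [nilradical_eq_sInf]
    refine Submodule.mem_sInf.mpr fun P hP => ?_
    haveI hPp : Ideal.IsPrime P := hP
    set K := R ⧸ P with hK
    let g' : ι → K := fun i => Ideal.Quotient.mk P (g i)
    have hspan : Submodule.span (ZMod p) (Set.range g') = ⊤ := by
      have himg : Set.range g' = (Ideal.Quotient.mkₐ (ZMod p) P).toLinearMap '' (Set.range g) := by
        rw [← Set.range_comp]; rfl
      rw [himg, Submodule.span_image, hg, Submodule.map_top, LinearMap.range_eq_top.mpr]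
      exact Ideal.Quotient.mk_surjective
    have hfr : Module.finrank (ZMod p) K ≤ 2 := hcard ▸ finrank_le_of_span_eq_top hspan
    haveI : Module.Finite (ZMod p) K :=
      ⟨by rw [← hspan]; exact Submodule.fg_span (Set.finite_range g')⟩
    haveI : Finite K := Module.finite_of_finite (ZMod p)
    haveI : Fintype K := Fintype.ofFinite K
    letI : Field K := (Finite.isField_of_domain K).toField
    have hcardK : Fintype.card K = p ^ Module.finrank (ZMod p) K := by
      have hc := Module.card_eq_pow_finrank (K := ZMod p) (V := K)
      rwa [ZMod.card] at hc
    have hfr0 : Module.finrank (ZMod p) K ≠ 0 := by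
      intro h0
      have : Subsingleton K := Module.finrank_zero_iff.mp h0
      exact not_subsingleton K this
    set w := Ideal.Quotient.mk P y with hw
    have hwp : w ^ p ^ 2 = w := by
      have h12 : Module.finrank (ZMod p) K = 1 ∨ Module.finrank (ZMod p) K = 2 := by omega
      rcases h12 with h | h
      · have hcK : Fintype.card K = p := by rw [hcardK, h, pow_one]
        have hpc := FiniteField.pow_card w
        rw [hcK] at hpc
        rw [pow_two, pow_mul, hpc, hpc]
      · have hcK : Fintype.card K = p ^ 2 := by rw [hcardK, h]
        have hpc := FiniteField.pow_card w
        rwa [hcK] at hpc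
    have hz : Ideal.Quotient.mk P (y ^ p ^ 2 - y) = 0 := by
      rw [_root_.map_sub, _root_.map_pow, ← hw, hwp, sub_self]
    exact Ideal.Quotient.eq_zero_iff_mem.mp hz
  rw [nilradical_eq_zero, Ideal.zero_eq_bot, Ideal.mem_bot] at hmem
  exact sub_eq_zero.mp hmem

set_option maxHeartbeats 1000000 in
set_option synthInstance.maxHeartbeats 400000 in
/-- The Frobenius property: if `p` is an odd prime not dividing the discriminant of a
quadratic field `F`, then `x ^ (p^2) ≡ x (mod p O_F)` for all `x` in the ring of integers. -/
private theorem wieferich_aux_frob (F : Type*) [Field F] [NumberField F]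
    (hdeg : Module.finrank ℚ F = 2) (p : ℕ) (hp : p.Prime)
    (hdisc : ¬ ((p : ℤ) ∣ NumberField.discr F)) (x : 𝓞 F) :
    x ^ p ^ 2 - x ∈ Ideal.span {(p : 𝓞 F)} := by
  classical
  haveI : Fact p.Prime := ⟨hp⟩
  set b := NumberField.RingOfIntegers.basis F with hb
  have hcard : Fintype.card (Module.Free.ChooseBasisIndex ℤ (𝓞 F)) = 2 := by
    rw [← Module.finrank_eq_card_chooseBasisIndex, NumberField.RingOfIntegers.rank, hdeg]
  set q1 : Ideal (𝓞 F) := Ideal.span {(p : 𝓞 F)} with hq1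
  have hne : q1 ≠ ⊤ := by
    intro h
    have h1 : (1 : 𝓞 F) ∈ q1 := h ▸ Submodule.mem_top
    rw [hq1, Ideal.mem_span_singleton] at h1
    obtain ⟨t, ht⟩ := h1
    have hN := congrArg (Algebra.norm ℤ) ht
    rw [_root_.map_one, _root_.map_mul] at hN
    have hnp : Algebra.norm ℤ ((p : ℤ) : 𝓞 F) = (p : ℤ) ^ 2 := by
      have h2 := Algebra.norm_algebraMap_of_basis b (p : ℤ)
      rwa [hcard] at h2
    rw [show ((p : ℕ) : 𝓞 F) = ((p : ℤ) : 𝓞 F) by push_cast; ring, hnp] at hN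
    have hdvd : ((p : ℤ) ^ 2) ∣ 1 := Dvd.intro _ hN.symm
    have hle : (p : ℤ) ^ 2 ≤ 1 := Int.le_of_dvd one_pos hdvd
    have h2p : (2 : ℤ) ≤ (p : ℤ) := by exact_mod_cast hp.two_le
    nlinarith
  haveI : Nontrivial (𝓞 F ⧸ q1) := Ideal.Quotient.nontrivial_iff.mpr hne
  have hp0 : ((p : ℕ) : 𝓞 F ⧸ q1) = 0 := by
    have hmem : (p : 𝓞 F) ∈ q1 := Ideal.mem_span_singleton_self _
    have : Ideal.Quotient.mk q1 ((p : ℕ) : 𝓞 F) = 0 := Ideal.Quotient.eq_zero_iff_mem.mpr hmem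
    rwa [map_natCast] at this
  haveI : CharP (𝓞 F ⧸ q1) p := (CharP.charP_iff_prime_eq_zero hp).mpr hp0
  letI : Algebra (ZMod p) (𝓞 F ⧸ q1) := ZMod.algebra _ p
  set f : ℤ →+* ZMod p := Int.castRingHom (ZMod p) with hf
  -- traces of square-nilpotents are divisible by p
  have htr : ∀ w : 𝓞 F, w ^ 2 ∈ q1 → (p : ℤ) ∣ Algebra.trace ℤ (𝓞 F) w := by
    intro w hw
    rw [hq1, Ideal.mem_span_singleton] at hw
    obtain ⟨t, ht⟩ := hw
    set M : Matrix _ _ ℤ := Algebra.leftMulMatrix b w with hM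
    have hM2 : (f.mapMatrix M) ^ 2 = 0 := by
      rw [← _root_.map_pow, ← map_pow, ht]
      have hsm : ((p : ℕ) : 𝓞 F) * t = (p : ℤ) • t := by
        rw [zsmul_eq_mul]; push_cast; ring
      rw [hsm, _root_.map_zsmul, map_zsmul, ← Int.cast_smul_eq_zsmul (ZMod p)]
      simp
    have hnil : IsNilpotent (Matrix.trace (f.mapMatrix M)) :=
      Matrix.isNilpotent_trace_of_isNilpotent ⟨2, hM2⟩
    have h0 : f (Matrix.trace M) = 0 := by
      have htrm : Matrix.trace (f.mapMatrix M) = f (Matrix.trace M) := by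
        simp [Matrix.trace, Matrix.diag, _root_.map_sum]
      rw [← htrm]
      exact hnil.eq_zero
    have htr' : Algebra.trace ℤ (𝓞 F) w = Matrix.trace M := Algebra.trace_eq_matrix_trace b w
    rw [htr', ← ZMod.intCast_zmod_eq_zero_iff_dvd]
    exact h0
  -- the key reducedness step
  have claim1 : ∀ z : 𝓞 F, z ^ 2 ∈ q1 → z ∈ q1 := by
    intro z hz
    have key : ∀ i, (p : ℤ) ∣ (Algebra.traceMatrix ℤ b *ᵥ b.equivFun z) i := by
      intro i
      rw [Algebra.traceMatrix_of_basis_mulVec]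
      apply htr
      have hzz : (z * b i) ^ 2 = z ^ 2 * (b i) ^ 2 := by ring
      rw [hzz]
      exact Ideal.mul_mem_right _ _ hz
    have hdet : ((Algebra.traceMatrix ℤ b).map f).det ≠ 0 := by
      rw [← RingHom.mapMatrix_apply, ← RingHom.map_det]
      intro h0
      apply hdisc
      rw [← ZMod.intCast_zmod_eq_zero_iff_dvd]
      exact h0
    have hv : (Algebra.traceMatrix ℤ b).map f *ᵥ (f ∘ b.equivFun z) = 0 := by
      funext i
      rw [← RingHom.map_mulVec]
      obtain ⟨d, hd⟩ := key i
      rw [hd]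
      simp
    have hz0 := Matrix.eq_zero_of_mulVec_eq_zero hdet hv
    have hdvd : ∀ i, (p : ℤ) ∣ b.repr z i := by
      intro i
      have h1 := congrFun hz0 i
      simp only [Function.comp_apply, Pi.zero_apply] at h1
      rw [← ZMod.intCast_zmod_eq_zero_iff_dvd]
      exact h1
    rw [hq1]
    have hzr := b.sum_repr z
    rw [← hzr]
    refine Submodule.sum_mem _ fun i _ => ?_
    obtain ⟨d, hd⟩ := hdvd i
    have hcst : (((p : ℤ) : 𝓞 F)) = (p : 𝓞 F) := by push_cast; ring
    rw [hd, mul_smul, zsmul_eq_mul, hcst]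
    exact Ideal.mem_span_singleton.mpr (dvd_mul_right _ _)
  haveI hred : IsReduced (𝓞 F ⧸ q1) := by
    constructor
    rintro z ⟨k, hk⟩
    obtain ⟨x', rfl⟩ := Ideal.Quotient.mk_surjective z
    have hxk : x' ^ k ∈ q1 := by rwa [← map_pow, Ideal.Quotient.eq_zero_iff_mem] at hk
    have hk0 : k ≠ 0 := by
      rintro rfl
      rw [pow_zero] at hxk
      exact hne (q1.eq_top_of_isUnit_mem hxk isUnit_one)
    have h2k : x' ^ (2 ^ k) ∈ q1 := by
      have hle : k ≤ 2 ^ k := (Nat.lt_two_pow_self (n := k)).le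
      have hsplit : x' ^ (2 ^ k) = x' ^ k * x' ^ (2 ^ k - k) := by
        rw [← pow_add]; congr 1; omega
      rw [hsplit]
      exact Ideal.mul_mem_right _ _ hxk
    have hdown : ∀ m, x' ^ (2 ^ m) ∈ q1 → x' ∈ q1 := by
      intro m
      induction m with
      | zero => simpa using id
      | succ n ih =>
        intro h
        apply ih
        apply claim1
        rwa [pow_succ, pow_mul] at h
    exact Ideal.Quotient.eq_zero_iff_mem.mpr (hdown k h2k)
  -- now the Frobenius property via residue fields
  letI : Algebra (ZMod p) (𝓞 F ⧸ q1) := ZMod.algebra _ p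
  have hspan : Submodule.span (ZMod p)
      (Set.range fun i => Ideal.Quotient.mk q1 (b i)) = ⊤ := by
    rw [eq_top_iff]
    rintro y -
    obtain ⟨w, rfl⟩ := Ideal.Quotient.mk_surjective y
    rw [← b.sum_repr w, _root_.map_sum]
    refine Submodule.sum_mem _ fun i _ => ?_
    rw [_root_.map_zsmul, ← Int.cast_smul_eq_zsmul (ZMod p)]
    exact Submodule.smul_mem _ _ (Submodule.subset_span ⟨i, rfl⟩)
  have hfrob := wieferich_aux_frobgen p hcard _ hspan (Ideal.Quotient.mk q1 x)
  have hz : Ideal.Quotient.mk q1 (x ^ p ^ 2 - x) = 0 := by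
    rw [_root_.map_sub, _root_.map_pow, hfrob, sub_self]
  exact Ideal.Quotient.eq_zero_iff_mem.mp hz

set_option maxHeartbeats 1000000 in
set_option synthInstance.maxHeartbeats 400000 in
/-- Let `F` be a real quadratic field, `p` an odd prime not dividing the discriminant of
`F`, and `ε` a fundamental unit of `F`. Then `ε^(p²−1) ≡ 1 (mod p²O_F)` if and only if
every unit `u` of `O_F` with `u ≡ 1 (mod pO_F)` satisfies `u ≡ 1 (mod p²O_F)`.
(This is the Wieferich-type criterion for the nonvanishing of `H²(G_{F,p}, Z/pZ)`.) -/
theorem wieferich_criterion_real_quadratic (F : Type*) [Field F] [NumberField F]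
    (hdeg : Module.finrank ℚ F = 2)
    (hreal : ∀ φ : F →+* ℂ, ∀ x : F, (φ x).im = 0)
    (p : ℕ) (hp : p.Prime) (hodd : p ≠ 2)
    (hdisc : ¬ ((p : ℤ) ∣ NumberField.discr F))
    (ε : (𝓞 F)ˣ)
    (hfund : ∀ u : (𝓞 F)ˣ, ∃ n : ℤ, u = ε ^ n ∨ u = -ε ^ n) :
    ((ε : 𝓞 F) ^ (p ^ 2 - 1) - 1 ∈ Ideal.span {(p : 𝓞 F) ^ 2}) ↔
      ∀ u : (𝓞 F)ˣ, (u : 𝓞 F) - 1 ∈ Ideal.span {(p : 𝓞 F)} →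
        (u : 𝓞 F) - 1 ∈ Ideal.span {(p : 𝓞 F) ^ 2} := by
  classical
  set q2 : Ideal (𝓞 F) := Ideal.span {(p : 𝓞 F) ^ 2} with hq2
  constructor
  · intro h u hu
    set f : 𝓞 F →+* 𝓞 F ⧸ q2 := Ideal.Quotient.mk q2 with hfdef
    set φ : (𝓞 F)ˣ →* (𝓞 F ⧸ q2)ˣ := Units.map f.toMonoidHom with hφ
    have hmk : ∀ s : 𝓞 F, s - 1 ∈ q2 → f s = 1 := by
      intro s hs
      rw [show (1 : 𝓞 F ⧸ q2) = f 1 by simp [hfdef], hfdef]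
      exact (Ideal.Quotient.mk_eq_mk_iff_sub_mem s 1).mpr hs
    have he : (φ ε) ^ (p ^ 2 - 1) = 1 := by
      apply Units.ext
      rw [Units.val_pow_eq_pow_val, Units.coe_map]
      show (f (ε : 𝓞 F)) ^ (p ^ 2 - 1) = 1
      rw [← _root_.map_pow]
      exact hmk _ h
    have hvp : (φ u) ^ p = 1 := by
      apply Units.ext
      rw [Units.val_pow_eq_pow_val, Units.coe_map]
      show (f (u : 𝓞 F)) ^ p = 1
      rw [← _root_.map_pow]
      apply hmk
      rw [hq2, Ideal.mem_span_singleton]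
      apply wieferich_aux_upow
      rwa [← Ideal.mem_span_singleton]
    have hv2 : (φ u) ^ (2 * (p ^ 2 - 1)) = 1 := by
      obtain ⟨n, hn⟩ := hfund u
      have hu2 : u ^ (2 : ℕ) = (ε ^ n) ^ (2 : ℕ) := by
        rcases hn with h' | h' <;> rw [h']
        exact neg_sq _
      have hstep : (φ u) ^ (2 * (p ^ 2 - 1)) = ((φ (ε ^ n)) ^ (2 : ℕ)) ^ (p ^ 2 - 1) := by
        rw [pow_mul, ← _root_.map_pow, hu2, _root_.map_pow]
      rw [hstep, _root_.map_zpow]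
      have hkey : ((φ ε ^ n) ^ (2 : ℕ)) ^ (p ^ 2 - 1) =
          ((φ ε ^ (p ^ 2 - 1)) ^ (2 : ℕ)) ^ n := by
        simp only [← zpow_natCast, ← _root_.zpow_mul]
        congr 1
        ring
      rw [hkey, he, one_pow, _root_.one_zpow]
    have h1 : orderOf (φ u) ∣ p := orderOf_dvd_of_pow_eq_one hvp
    have h2 : orderOf (φ u) ∣ 2 * (p ^ 2 - 1) := orderOf_dvd_of_pow_eq_one hv2
    have hco : Nat.gcd p (2 * (p ^ 2 - 1)) = 1 := by
      have hco' : Nat.Coprime p (2 * (p ^ 2 - 1)) := by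
        rw [Nat.Prime.coprime_iff_not_dvd hp]
        intro hd
        rcases (Nat.Prime.dvd_mul hp).mp hd with h' | h'
        · exact hodd ((Nat.prime_dvd_prime_iff_eq hp Nat.prime_two).mp h')
        · have hpp : p ∣ p ^ 2 := dvd_pow_self p two_ne_zero
          have hd1 := Nat.dvd_sub hpp h'
          have hps : 1 ≤ p ^ 2 := Nat.one_le_pow _ _ hp.pos
          have he1 : p ^ 2 - (p ^ 2 - 1) = 1 := by omega
          rw [he1] at hd1
          exact hp.one_lt.ne' (Nat.dvd_one.mp hd1)
      exact hco'
    have hord : orderOf (φ u) ∣ 1 := by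
      rw [← hco]
      exact Nat.dvd_gcd h1 h2
    have hv1 : φ u = 1 := orderOf_eq_one_iff.mp (Nat.dvd_one.mp hord)
    have hfu : f (u : 𝓞 F) = 1 := by
      have := congrArg Units.val hv1
      rwa [Units.coe_map] at this
    rw [show (1 : 𝓞 F ⧸ q2) = f 1 by simp [hfdef], hfdef,
      Ideal.Quotient.mk_eq_mk_iff_sub_mem] at hfu
    exact hfu
  · intro h
    have hf := wieferich_aux_frob F hdeg p hp hdisc (ε : 𝓞 F)
    have hps : 1 ≤ p ^ 2 := Nat.one_le_pow _ _ hp.pos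
    have h1 : (ε : 𝓞 F) * ((ε : 𝓞 F) ^ (p ^ 2 - 1) - 1) ∈ Ideal.span {(p : 𝓞 F)} := by
      have heq : (ε : 𝓞 F) * ((ε : 𝓞 F) ^ (p ^ 2 - 1) - 1) = (ε : 𝓞 F) ^ p ^ 2 - (ε : 𝓞 F) := by
        have hp2 : p ^ 2 - 1 + 1 = p ^ 2 := by omega
        calc (ε : 𝓞 F) * ((ε : 𝓞 F) ^ (p ^ 2 - 1) - 1)
            = (ε : 𝓞 F) ^ (p ^ 2 - 1 + 1) - (ε : 𝓞 F) := by ring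
          _ = (ε : 𝓞 F) ^ p ^ 2 - (ε : 𝓞 F) := by rw [hp2]
      rw [heq]
      exact hf
    have h2 : (ε : 𝓞 F) ^ (p ^ 2 - 1) - 1 ∈ Ideal.span {(p : 𝓞 F)} := by
      have h3 := Ideal.mul_mem_left _ ((ε⁻¹ : (𝓞 F)ˣ) : 𝓞 F) h1
      rwa [← mul_assoc, show ((ε⁻¹ : (𝓞 F)ˣ) : 𝓞 F) * (ε : 𝓞 F) = 1 by
        rw [← Units.val_mul, inv_mul_cancel, Units.val_one], one_mul] at h3
    have h3 := h (ε ^ (p ^ 2 - 1)) (by rw [Units.val_pow_eq_pow_val]; exact h2)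
    rwa [Units.val_pow_eq_pow_val] at h3
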